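/- For every γ ∈ (0, D*) there exist λ₁, λ₂ ∈ [0,1] with λ₂ < λ* < λ₁ such that D(P^(λ₁)‖P₂) = γ and D(P^(λ₂)‖P₁) = γ; consequently min{D(P^(λ₁)‖P₂), D(P^(λ₂)‖P₁)} = γ and the thresholds α₁ = D(P^(λ₂)‖P₂) − D(P^(λ₂)‖P₁) and β₁ = D(P^(λ₁)‖P₂) − D(P^(λ₁)‖P₁) satisfy α₁ > 0 > β₁, in particular α₁ > β₁. -/
import Mathlib


open Real Filter Finset MeasureTheory
open scoped Classical

variable {𝒳 : Type*} [Fintype 𝒳] [DecidableEq 𝒳] [Nonempty 𝒳]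

/-- Kullback–Leibler divergence `D(Q‖P)` between pmfs on a finite alphabet. -/
noncomputable def kl (Q P : 𝒳 → ℝ) : ℝ :=
  ∑ x, Q x * Real.log (Q x / P x)

/-- The `λ`-tilted distribution `P^(λ)` of `P₁` and `P₂`. -/
noncomputable def tilt (P₁ P₂ : 𝒳 → ℝ) (l : ℝ) : 𝒳 → ℝ :=
  fun x => P₁ x ^ (1 - l) * P₂ x ^ l / ∑ a, P₁ a ^ (1 - l) * P₂ a ^ l

/-- Probability of a set of length-`N` sample paths under i.i.d. sampling from `P`. -/
noncomputable def prodProb (P : 𝒳 → ℝ) {N : ℕ} (S : Set (Fin N → 𝒳)) : ℝ :=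
  ∑ ω : Fin N → 𝒳, S.indicator (fun ω' => ∏ i, P (ω' i)) ω

/-- The fixed-length error-exponent region `R_FD`. -/
def RFD (P₁ P₂ : 𝒳 → ℝ) : Set (ℝ × ℝ) :=
  {p | 0 ≤ p.1 ∧ 0 ≤ p.2 ∧
    ∃ l ∈ Set.Icc (0:ℝ) 1,
      p.1 ≤ kl (tilt P₁ P₂ l) P₁ ∧ p.2 ≤ kl (tilt P₁ P₂ l) P₂}

/-- `E₁(γ) = max{D(P^(λ)‖P₁) : λ ∈ [0,1], D(P^(λ)‖P₂) ≥ γ}` (sup of the empty set is 0). -/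
noncomputable def E1exp (P₁ P₂ : 𝒳 → ℝ) (γ : ℝ) : ℝ :=
  sSup {E | ∃ l ∈ Set.Icc (0:ℝ) 1, γ ≤ kl (tilt P₁ P₂ l) P₂ ∧ E = kl (tilt P₁ P₂ l) P₁}

/-- `E₂(γ) = max{D(P^(λ)‖P₂) : λ ∈ [0,1], D(P^(λ)‖P₁) ≥ γ}` (sup of the empty set is 0). -/
noncomputable def E2exp (P₁ P₂ : 𝒳 → ℝ) (γ : ℝ) : ℝ :=
  sSup {E | ∃ l ∈ Set.Icc (0:ℝ) 1, γ ≤ kl (tilt P₁ P₂ l) P₁ ∧ E = kl (tilt P₁ P₂ l) P₂}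

/-- A sequential hypothesis test whose stopping time is bounded by `N`:
a stopping time `τ` for the coordinate filtration, together with decision events
`A1`, `A2` that are determined by the samples observed up to time `τ`,
are disjoint, and exhaust the sample space. -/
structure HypTest (𝒳 : Type*) (N : ℕ) where
  τ : (Fin N → 𝒳) → ℕ
  A1 : Set (Fin N → 𝒳)
  A2 : Set (Fin N → 𝒳)
  tau_le : ∀ ω, τ ω ≤ N
  stopping : ∀ ω ω', (∀ i : Fin N, (i : ℕ) < τ ω → ω i = ω' i) → τ ω' = τ ω
  adapted1 : ∀ ω ω', (∀ i : Fin N, (i : ℕ) < τ ω → ω i = ω' i) → (ω ∈ A1 ↔ ω' ∈ A1)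
  adapted2 : ∀ ω ω', (∀ i : Fin N, (i : ℕ) < τ ω → ω i = ω' i) → (ω ∈ A2 ↔ ω' ∈ A2)
  disj : Disjoint A1 A2
  exhaust : A1 ∪ A2 = Set.univ

/-- `(E₁, E₂)` is achievable by `γ`-almost-fixed-length tests. -/
def AFLAchievable (P₁ P₂ : 𝒳 → ℝ) (γ E₁ E₂ : ℝ) : Prop :=
  0 ≤ E₁ ∧ 0 ≤ E₂ ∧
  ∃ c : ℝ, 0 < c ∧ ∃ l : ℕ, 0 < l ∧
    ∀ δ : ℝ, 0 < δ → ∃ n₀ : ℕ, ∀ n : ℕ, n₀ ≤ n →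
      ∃ N : ℕ, (N : ℝ) ≤ c * (n : ℝ) ^ l ∧
        ∃ T : HypTest 𝒳 N,
          prodProb P₁ {ω | n < T.τ ω} ≤ Real.exp (-(γ * n)) ∧
          prodProb P₂ {ω | n < T.τ ω} ≤ Real.exp (-(γ * n)) ∧
          prodProb P₁ T.A2 ≤ Real.exp (-((E₁ - δ) * n)) ∧
          prodProb P₂ T.A1 ≤ Real.exp (-((E₂ - δ) * n))

/-- `(E₁, E₂, E_Ω)` is achievable by fixed-length tests with a rejection option. -/
def RejAchievable (P₁ P₂ : 𝒳 → ℝ) (E₁ E₂ EΩ : ℝ) : Prop :=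
  0 ≤ E₁ ∧ 0 ≤ E₂ ∧ 0 ≤ EΩ ∧
  ∀ δ : ℝ, 0 < δ → ∃ n₀ : ℕ, ∀ n : ℕ, n₀ ≤ n →
    ∃ A1 A2 AΩ : Set (Fin n → 𝒳),
      Disjoint A1 A2 ∧ Disjoint A1 AΩ ∧ Disjoint A2 AΩ ∧ A1 ∪ A2 ∪ AΩ = Set.univ ∧
      prodProb P₁ A2 ≤ Real.exp (-((E₁ - δ) * n)) ∧
      prodProb P₂ A1 ≤ Real.exp (-((E₂ - δ) * n)) ∧
      prodProb P₁ AΩ + prodProb P₂ AΩ ≤ Real.exp (-((EΩ - δ) * n))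

/-- Sum of the log-likelihood ratios of the first `n` samples. -/
noncomputable def S1 (P₁ P₂ : 𝒳 → ℝ) (n : ℕ) {N : ℕ} (ω : Fin N → 𝒳) : ℝ :=
  ∑ i ∈ Finset.univ.filter (fun i : Fin N => (i : ℕ) < n),
    Real.log (P₁ (ω i) / P₂ (ω i))

/-- Sum of the log-likelihood ratios of the samples after time `n`. -/
noncomputable def S2 (P₁ P₂ : 𝒳 → ℝ) (n : ℕ) {N : ℕ} (ω : Fin N → 𝒳) : ℝ :=
  ∑ i ∈ Finset.univ.filter (fun i : Fin N => n ≤ (i : ℕ)),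
    Real.log (P₁ (ω i) / P₂ (ω i))

/-- Event that the two-phase test (phase-one thresholds `α₁ > β₁`, phase-two threshold `α`)
chooses `H₁`. -/
def twoPhaseA1 (P₁ P₂ : 𝒳 → ℝ) (k n : ℕ) (α₁ β₁ α : ℝ) : Set (Fin ((k + 1) * n) → 𝒳) :=
  {ω | α₁ ≤ S1 P₁ P₂ n ω / n ∨
    (β₁ < S1 P₁ P₂ n ω / n ∧ S1 P₁ P₂ n ω / n < α₁ ∧ α ≤ S2 P₁ P₂ n ω / (k * n))}

/-- Event that the two-phase test chooses `H₂`. -/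
def twoPhaseA2 (P₁ P₂ : 𝒳 → ℝ) (k n : ℕ) (α₁ β₁ α : ℝ) : Set (Fin ((k + 1) * n) → 𝒳) :=
  {ω | S1 P₁ P₂ n ω / n ≤ β₁ ∨
    (β₁ < S1 P₁ P₂ n ω / n ∧ S1 P₁ P₂ n ω / n < α₁ ∧ S2 P₁ P₂ n ω / (k * n) < α)}

/-- Stopping time of the two-phase test: `n` if phase one is decisive, `(k+1)n` otherwise. -/
noncomputable def twoPhaseTau (P₁ P₂ : 𝒳 → ℝ) (k n : ℕ) (α₁ β₁ : ℝ)
    (ω : Fin ((k + 1) * n) → 𝒳) : ℕ :=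
  if β₁ < S1 P₁ P₂ n ω / n ∧ S1 P₁ P₂ n ω / n < α₁ then (k + 1) * n else n
section Aux

variable {P₁ P₂ : 𝒳 → ℝ}

lemma Zsum_pos (h1 : ∀ x, 0 < P₁ x) (h2 : ∀ x, 0 < P₂ x) (l : ℝ) :
    0 < ∑ a, P₁ a ^ (1 - l) * P₂ a ^ l :=
  Finset.sum_pos (fun a _ => mul_pos (Real.rpow_pos_of_pos (h1 a) _)
    (Real.rpow_pos_of_pos (h2 a) _)) Finset.univ_nonempty

lemma tilt_pos (h1 : ∀ x, 0 < P₁ x) (h2 : ∀ x, 0 < P₂ x) (l : ℝ) (x : 𝒳) :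
    0 < tilt P₁ P₂ l x :=
  div_pos (mul_pos (Real.rpow_pos_of_pos (h1 x) _) (Real.rpow_pos_of_pos (h2 x) _))
    (Zsum_pos h1 h2 l)

lemma cont_kl_tilt (h1 : ∀ x, 0 < P₁ x) (h2 : ∀ x, 0 < P₂ x) {P : 𝒳 → ℝ}
    (hP : ∀ x, 0 < P x) : Continuous fun l => kl (tilt P₁ P₂ l) P := by
  have hW : ∀ x : 𝒳, Continuous fun l : ℝ => P₁ x ^ (1 - l) * P₂ x ^ l := by
    intro x
    have e1 : (fun l : ℝ => P₁ x ^ (1 - l) * P₂ x ^ l)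
        = fun l : ℝ => Real.exp (Real.log (P₁ x) * (1 - l)) *
            Real.exp (Real.log (P₂ x) * l) := by
      funext l
      rw [Real.rpow_def_of_pos (h1 x), Real.rpow_def_of_pos (h2 x)]
    rw [e1]
    exact (Real.continuous_exp.comp (continuous_const.mul
        (continuous_const.sub continuous_id))).mul
      (Real.continuous_exp.comp (continuous_const.mul continuous_id))
  have hZ : Continuous fun l : ℝ => ∑ a, P₁ a ^ (1 - l) * P₂ a ^ l :=
    continuous_finset_sum _ fun a _ => hW a
  have htilt : ∀ x : 𝒳, Continuous fun l : ℝ => tilt P₁ P₂ l x := fun x =>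
    (hW x).div hZ fun l => (Zsum_pos h1 h2 l).ne'
  unfold kl
  refine continuous_finset_sum _ fun x _ => (htilt x).mul ?_
  exact Continuous.log ((htilt x).div_const _)
    fun l => (div_pos (tilt_pos h1 h2 l x) (hP x)).ne'

lemma tilt_one (h2sum : ∑ x, P₂ x = 1) : tilt P₁ P₂ 1 = P₂ := by
  funext x
  simp only [tilt, sub_self, Real.rpow_zero, Real.rpow_one, one_mul, h2sum, div_one]

lemma tilt_zero (h1sum : ∑ x, P₁ x = 1) : tilt P₁ P₂ 0 = P₁ := by
  funext x
  simp only [tilt, sub_zero, Real.rpow_zero, Real.rpow_one, mul_one, h1sum, div_one]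

lemma kl_self {P : 𝒳 → ℝ} (hP : ∀ x, 0 < P x) : kl P P = 0 :=
  Finset.sum_eq_zero fun x _ => by
    rw [div_self (hP x).ne', Real.log_one, mul_zero]

lemma kl_diff (h1 : ∀ x, 0 < P₁ x) (h2 : ∀ x, 0 < P₂ x) (l : ℝ) :
    kl (tilt P₁ P₂ l) P₂ - kl (tilt P₁ P₂ l) P₁
      = ∑ x, tilt P₁ P₂ l x * Real.log (P₁ x / P₂ x) := by
  unfold kl
  rw [← Finset.sum_sub_distrib]
  refine Finset.sum_congr rfl fun x _ => ?_
  rw [← mul_sub]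
  congr 1
  rw [Real.log_div (tilt_pos h1 h2 l x).ne' (h2 x).ne',
      Real.log_div (tilt_pos h1 h2 l x).ne' (h1 x).ne',
      Real.log_div (h1 x).ne' (h2 x).ne']
  ring

lemma key_factor {u v : ℝ} (hu : 0 < u) (hv : 0 < v) (l m : ℝ) :
    u ^ l * v ^ m - u ^ m * v ^ l = u ^ l * v ^ l * (v ^ (m - l) - u ^ (m - l)) := by
  have h1 : v ^ m = v ^ l * v ^ (m - l) := by
    rw [← Real.rpow_add hv]; congr 1; ring
  have h2 : u ^ m = u ^ l * u ^ (m - l) := by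
    rw [← Real.rpow_add hu]; congr 1; ring
  rw [h1, h2]; ring

lemma key_nonneg {u v l m : ℝ} (hu : 0 < u) (hv : 0 < v) (hlm : l < m) :
    0 ≤ (u ^ l * v ^ m - u ^ m * v ^ l) * (Real.log v - Real.log u) := by
  rw [key_factor hu hv]
  have hA : 0 < u ^ l * v ^ l :=
    mul_pos (Real.rpow_pos_of_pos hu l) (Real.rpow_pos_of_pos hv l)
  rcases lt_trichotomy u v with h | h | h
  · have hb : u ^ (m - l) < v ^ (m - l) := Real.rpow_lt_rpow hu.le h (by linarith)
    have hc : Real.log u < Real.log v := Real.log_lt_log hu h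
    exact mul_nonneg (mul_nonneg hA.le (by linarith)) (by linarith)
  · rw [h]; simp
  · have hb : v ^ (m - l) < u ^ (m - l) := Real.rpow_lt_rpow hv.le h (by linarith)
    have hc : Real.log v < Real.log u := Real.log_lt_log hv h
    exact (mul_pos_of_neg_of_neg
      (mul_neg_of_pos_of_neg hA (by linarith)) (by linarith)).le

lemma key_pos {u v l m : ℝ} (hu : 0 < u) (hv : 0 < v) (hlm : l < m) (hne : u ≠ v) :
    0 < (u ^ l * v ^ m - u ^ m * v ^ l) * (Real.log v - Real.log u) := by
  rw [key_factor hu hv]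
  have hA : 0 < u ^ l * v ^ l :=
    mul_pos (Real.rpow_pos_of_pos hu l) (Real.rpow_pos_of_pos hv l)
  rcases hne.lt_or_gt with h | h
  · have hb : u ^ (m - l) < v ^ (m - l) := Real.rpow_lt_rpow hu.le h (by linarith)
    have hc : Real.log u < Real.log v := Real.log_lt_log hu h
    exact mul_pos (mul_pos hA (by linarith)) (by linarith)
  · have hb : v ^ (m - l) < u ^ (m - l) := Real.rpow_lt_rpow hv.le h (by linarith)
    have hc : Real.log v < Real.log u := Real.log_lt_log hv h
    exact mul_pos_of_neg_of_neg
      (mul_neg_of_pos_of_neg hA (by linarith)) (by linarith)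

lemma exists_ratio_ne (h1 : ∀ x, 0 < P₁ x) (_h2 : ∀ x, 0 < P₂ x)
    (h1sum : ∑ x, P₁ x = 1) (h2sum : ∑ x, P₂ x = 1) (hne : P₁ ≠ P₂) :
    ∃ x y : 𝒳, P₂ x / P₁ x ≠ P₂ y / P₁ y := by
  by_contra h
  push_neg at h
  apply hne
  obtain ⟨x0⟩ := (inferInstance : Nonempty 𝒳)
  have hPc : ∀ x, P₂ x = (P₂ x0 / P₁ x0) * P₁ x := by
    intro x
    have hx := h x x0
    rw [div_eq_iff (h1 x).ne'] at hx
    exact hx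
  have hc1 : P₂ x0 / P₁ x0 = 1 := by
    have key : ∑ x, P₂ x = (P₂ x0 / P₁ x0) * ∑ x, P₁ x := by
      rw [Finset.mul_sum]
      exact Finset.sum_congr rfl fun x _ => hPc x
    rw [h1sum, h2sum, mul_one] at key
    linarith
  funext x
  rw [hPc x, hc1, one_mul]

lemma G_strictAnti (h1 : ∀ x, 0 < P₁ x) (h2 : ∀ x, 0 < P₂ x)
    (h1sum : ∑ x, P₁ x = 1) (h2sum : ∑ x, P₂ x = 1) (hne : P₁ ≠ P₂)
    {l m : ℝ} (hlm : l < m) :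
    ∑ x, tilt P₁ P₂ m x * Real.log (P₁ x / P₂ x)
      < ∑ x, tilt P₁ P₂ l x * Real.log (P₁ x / P₂ x) := by
  set t : 𝒳 → ℝ := fun x => P₂ x / P₁ x with ht_def
  set M : 𝒳 → ℝ := fun x => Real.log (P₁ x / P₂ x) with hM_def
  have htpos : ∀ x, 0 < t x := fun x => div_pos (h2 x) (h1 x)
  have hWe : ∀ (s : ℝ) (x : 𝒳), P₁ x ^ (1 - s) * P₂ x ^ s = P₁ x * t x ^ s := by
    intro s x
    rw [ht_def]
    rw [Real.div_rpow (h2 x).le (h1 x).le, Real.rpow_sub (h1 x), Real.rpow_one]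
    field_simp
  have hZpos : ∀ s : ℝ, 0 < ∑ a, P₁ a * t a ^ s := fun s =>
    Finset.sum_pos (fun a _ => mul_pos (h1 a) (Real.rpow_pos_of_pos (htpos a) s))
      Finset.univ_nonempty
  have gl : ∀ s : ℝ, ∑ x, tilt P₁ P₂ s x * M x
      = (∑ x, (P₁ x * t x ^ s) * M x) / (∑ a, P₁ a * t a ^ s) := by
    intro s
    rw [Finset.sum_div]
    refine Finset.sum_congr rfl fun x _ => ?_
    simp only [tilt, hWe s]
    rw [div_mul_eq_mul_div]
  rw [gl, gl, div_lt_div_iff₀ (hZpos m) (hZpos l)]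
  set Wl : 𝒳 → ℝ := fun x => P₁ x * t x ^ l with hWl
  set Wm : 𝒳 → ℝ := fun x => P₁ x * t x ^ m with hWm
  have hlogt : ∀ x, Real.log (t x) = Real.log (P₂ x) - Real.log (P₁ x) := fun x =>
    Real.log_div (h2 x).ne' (h1 x).ne'
  have hMlog : ∀ x, M x = Real.log (P₁ x) - Real.log (P₂ x) := fun x =>
    Real.log_div (h1 x).ne' (h2 x).ne'
  have hterm : ∀ x y : 𝒳, (Wl x * Wm y - Wm x * Wl y) * (M x - M y)
      = P₁ x * P₁ y * ((t x ^ l * t y ^ m - t x ^ m * t y ^ l) *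
          (Real.log (t y) - Real.log (t x))) := by
    intro x y
    rw [hWl, hWm, hMlog x, hMlog y, hlogt x, hlogt y]
    ring
  obtain ⟨x0, y0, hxy⟩ := exists_ratio_ne h1 h2 h1sum h2sum hne
  have hΔpos : 0 < ∑ x, ∑ y, (Wl x * Wm y - Wm x * Wl y) * (M x - M y) := by
    have hnn : ∀ x y : 𝒳, 0 ≤ (Wl x * Wm y - Wm x * Wl y) * (M x - M y) := by
      intro x y
      rw [hterm x y]
      exact mul_nonneg (mul_pos (h1 x) (h1 y)).le
        (key_nonneg (htpos x) (htpos y) hlm)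
    refine Finset.sum_pos' (fun x _ => Finset.sum_nonneg fun y _ => hnn x y)
      ⟨x0, Finset.mem_univ x0, Finset.sum_pos' (fun y _ => hnn x0 y)
        ⟨y0, Finset.mem_univ y0, ?_⟩⟩
    rw [hterm x0 y0]
    exact mul_pos (mul_pos (h1 x0) (h1 y0))
      (key_pos (htpos x0) (htpos y0) hlm hxy)
  have expand : ∑ x, ∑ y, (Wl x * Wm y - Wm x * Wl y) * (M x - M y)
      = 2 * ((∑ x, Wl x * M x) * (∑ a, Wm a) - (∑ x, Wm x * M x) * (∑ a, Wl a)) := by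
    have swap1 : ∑ x, ∑ y, Wl x * (Wm y * M y) = ∑ x, ∑ y, (Wm x * M x) * Wl y := by
      rw [Finset.sum_comm]
      exact Finset.sum_congr rfl fun x _ => Finset.sum_congr rfl fun y _ => by ring
    have swap2 : ∑ x, ∑ y, Wm x * (Wl y * M y) = ∑ x, ∑ y, (Wl x * M x) * Wm y := by
      rw [Finset.sum_comm]
      exact Finset.sum_congr rfl fun x _ => Finset.sum_congr rfl fun y _ => by ring
    have e1 : (∑ x, Wl x * M x) * (∑ a, Wm a) = ∑ x, ∑ y, (Wl x * M x) * Wm y :=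
      Finset.sum_mul_sum _ _ _ _
    have e2 : (∑ x, Wm x * M x) * (∑ a, Wl a) = ∑ x, ∑ y, (Wm x * M x) * Wl y :=
      Finset.sum_mul_sum _ _ _ _
    have lhs : ∑ x, ∑ y, (Wl x * Wm y - Wm x * Wl y) * (M x - M y)
        = (∑ x, ∑ y, (Wl x * M x) * Wm y) - (∑ x, ∑ y, (Wm x * M x) * Wl y)
          - (∑ x, ∑ y, Wl x * (Wm y * M y)) + (∑ x, ∑ y, Wm x * (Wl y * M y)) := by
      rw [← Finset.sum_sub_distrib, ← Finset.sum_sub_distrib, ← Finset.sum_add_distrib]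
      refine Finset.sum_congr rfl fun x _ => ?_
      rw [← Finset.sum_sub_distrib, ← Finset.sum_sub_distrib, ← Finset.sum_add_distrib]
      exact Finset.sum_congr rfl fun y _ => by ring
    rw [lhs, swap1, swap2, ← e1, ← e2]
    ring
  rw [expand] at hΔpos
  linarith

end Aux

/-- For `0 < γ < D*` the parameters of the two-phase test exist: there are
`l₂ < λ* < l₁` in `[0,1]` with `D(P^(l₁)‖P₂) = γ = D(P^(l₂)‖P₁)`, and the resulting
thresholds satisfy `α₁ > 0 > β₁`. -/
theorem twoPhase_parameters_exist (P₁ P₂ : 𝒳 → ℝ)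
    (h1pos : ∀ x, 0 < P₁ x) (h2pos : ∀ x, 0 < P₂ x)
    (h1sum : ∑ x, P₁ x = 1) (h2sum : ∑ x, P₂ x = 1)
    (hne : P₁ ≠ P₂)
    (ls : ℝ) (hls : ls ∈ Set.Ioo (0:ℝ) 1)
    (hchern : kl (tilt P₁ P₂ ls) P₁ = kl (tilt P₁ P₂ ls) P₂)
    (γ : ℝ) (hγ0 : 0 < γ) (hγD : γ < kl (tilt P₁ P₂ ls) P₁) :
    ∃ l₁ ∈ Set.Icc (0:ℝ) 1, ∃ l₂ ∈ Set.Icc (0:ℝ) 1,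
      l₂ < ls ∧ ls < l₁ ∧
      kl (tilt P₁ P₂ l₁) P₂ = γ ∧
      kl (tilt P₁ P₂ l₂) P₁ = γ ∧
      min (kl (tilt P₁ P₂ l₁) P₂) (kl (tilt P₁ P₂ l₂) P₁) = γ ∧
      0 < kl (tilt P₁ P₂ l₂) P₂ - kl (tilt P₁ P₂ l₂) P₁ ∧
      kl (tilt P₁ P₂ l₁) P₂ - kl (tilt P₁ P₂ l₁) P₁ < 0 := by
  obtain ⟨hls0, hls1⟩ := hls
  -- endpoint values
  have hF1one : kl (tilt P₁ P₂ 1) P₂ = 0 := by rw [tilt_one h2sum]; exact kl_self h2pos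
  have hF2zero : kl (tilt P₁ P₂ 0) P₁ = 0 := by rw [tilt_zero h1sum]; exact kl_self h1pos
  have hcont1 : Continuous fun l => kl (tilt P₁ P₂ l) P₂ := cont_kl_tilt h1pos h2pos h2pos
  have hcont2 : Continuous fun l => kl (tilt P₁ P₂ l) P₁ := cont_kl_tilt h1pos h2pos h1pos
  -- IVT for l₁ on [ls, 1]
  have hmem1 : γ ∈ Set.Icc (kl (tilt P₁ P₂ (1:ℝ)) P₂) (kl (tilt P₁ P₂ ls) P₂) := by
    constructor
    · rw [hF1one]; exact hγ0.le
    · rw [← hchern]; exact hγD.le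
  obtain ⟨l₁, hl₁mem, hl₁val⟩ :=
    intermediate_value_Icc' hls1.le hcont1.continuousOn hmem1
  replace hl₁val : kl (tilt P₁ P₂ l₁) P₂ = γ := hl₁val
  -- IVT for l₂ on [0, ls]
  have hmem2 : γ ∈ Set.Icc (kl (tilt P₁ P₂ (0:ℝ)) P₁) (kl (tilt P₁ P₂ ls) P₁) := by
    constructor
    · rw [hF2zero]; exact hγ0.le
    · exact hγD.le
  obtain ⟨l₂, hl₂mem, hl₂val⟩ :=
    intermediate_value_Icc hls0.le hcont2.continuousOn hmem2
  replace hl₂val : kl (tilt P₁ P₂ l₂) P₁ = γ := hl₂val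
  have hl₁ne : l₁ ≠ ls := by
    intro h
    rw [h] at hl₁val
    rw [← hchern] at hl₁val
    exact absurd hl₁val (ne_of_lt hγD).symm
  have hl₂ne : l₂ ≠ ls := by
    intro h
    rw [h] at hl₂val
    exact absurd hl₂val (ne_of_lt hγD).symm
  have hlsl₁ : ls < l₁ := lt_of_le_of_ne hl₁mem.1 (Ne.symm hl₁ne)
  have hl₂ls : l₂ < ls := lt_of_le_of_ne hl₂mem.2 hl₂ne
  have hGls : kl (tilt P₁ P₂ ls) P₂ - kl (tilt P₁ P₂ ls) P₁ = 0 := by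
    rw [hchern]; ring
  refine ⟨l₁, ⟨le_trans hls0.le hl₁mem.1, hl₁mem.2⟩,
    l₂, ⟨hl₂mem.1, le_trans hl₂mem.2 hls1.le⟩, hl₂ls, hlsl₁, hl₁val, hl₂val, ?_, ?_, ?_⟩
  · rw [hl₁val, hl₂val, min_self]
  · have h := G_strictAnti h1pos h2pos h1sum h2sum hne hl₂ls
    rw [← kl_diff h1pos h2pos, ← kl_diff h1pos h2pos] at h
    rw [hGls] at h
    exact h
  · have h := G_strictAnti h1pos h2pos h1sum h2sum hne hlsl₁
    rw [← kl_diff h1pos h2pos, ← kl_diff h1pos h2pos, hGls] at h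
    exact h
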